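/- Let H ∈ ℝ^{s×n}, b ∈ ℝ^{s}, z ∈ ℝ^{n}, let Δ₁, …, Δ_r ∈ ℝ^{n×q} be entrywise nonnegative and ξ₁, …, ξ_r ∈ ℝ^{q}. Define the set ℬ = {Σ_{i=1}^{r} E_i ξ_i : E_i ∈ ℝ^{n×q}, |E_i| ≤ Δ_i entrywise for each i}. Then {z} ⊕ ℬ ⊆ {x ∈ ℝ^{n} : Hx ≤ b} if and only if Hz + |H| Σ_{i=1}^{r} Δ_i |ξ_i| ≤ b componentwise. -/

import Mathlib

/-- Entrywise absolute value of a matrix. -/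
def eabs {p q : Type*} (M : Matrix p q ℝ) : Matrix p q ℝ := fun i j => |M i j|

private lemma mul_sign_eq_abs (x : ℝ) : x * Real.sign x = |x| := by
  rcases lt_trichotomy x 0 with h | h | h
  · rw [Real.sign_of_neg h, abs_of_neg h]; ring
  · simp [h]
  · rw [Real.sign_of_pos h, abs_of_pos h]; ring

private lemma abs_sign_le_one (x : ℝ) : |Real.sign x| ≤ 1 := by
  rcases Real.sign_apply_eq x with h | h | h <;> rw [h] <;> norm_num

/-- With `ℬ = {Σᵢ Eᵢ ξᵢ : |Eᵢ| ≤ Δᵢ entrywise}`, the inclusion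
`{z} ⊕ ℬ ⊆ {x : Hx ≤ b}` holds if and only if
`Hz + |H| Σᵢ Δᵢ|ξᵢ| ≤ b` componentwise. -/
theorem constraint_tightening_iff {s n q r : ℕ}
    (H : Matrix (Fin s) (Fin n) ℝ) (b : Fin s → ℝ) (z : Fin n → ℝ)
    (Δ : Fin r → Matrix (Fin n) (Fin q) ℝ)
    (hΔ : ∀ i a c, 0 ≤ Δ i a c)
    (ξ : Fin r → Fin q → ℝ) :
    (∀ w ∈ {w : Fin n → ℝ | ∃ E : Fin r → Matrix (Fin n) (Fin q) ℝ,
        (∀ i a c, |E i a c| ≤ Δ i a c) ∧ w = ∑ i, (E i).mulVec (ξ i)},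
      H.mulVec (z + w) ≤ b)
    ↔ H.mulVec z + (eabs H).mulVec (∑ i, (Δ i).mulVec fun j => |ξ i j|) ≤ b := by
  constructor
  · intro h k
    set E : Fin r → Matrix (Fin n) (Fin q) ℝ :=
      fun i a c => Real.sign (H k a) * Real.sign (ξ i c) * Δ i a c with hEdef
    have hbd : ∀ i a c, |E i a c| ≤ Δ i a c := by
      intro i a c
      have habs : |E i a c| = |Real.sign (H k a)| * |Real.sign (ξ i c)| * Δ i a c := by
        rw [hEdef]; simp [abs_mul, abs_of_nonneg (hΔ i a c)]
      rw [habs]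
      calc |Real.sign (H k a)| * |Real.sign (ξ i c)| * Δ i a c
          ≤ 1 * 1 * Δ i a c := by
            apply mul_le_mul_of_nonneg_right _ (hΔ i a c)
            exact mul_le_mul (abs_sign_le_one _) (abs_sign_le_one _)
              (abs_nonneg _) zero_le_one
        _ = Δ i a c := by ring
    have hmem := h (∑ i, (E i).mulVec (ξ i)) ⟨E, hbd, rfl⟩ k
    have term : ∀ a i c, H k a * (E i a c * ξ i c) = |H k a| * (Δ i a c * |ξ i c|) := by
      intro a i c
      rw [hEdef]
      show H k a * (Real.sign (H k a) * Real.sign (ξ i c) * Δ i a c * ξ i c) = _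
      rw [show H k a * (Real.sign (H k a) * Real.sign (ξ i c) * Δ i a c * ξ i c)
          = (H k a * Real.sign (H k a)) * ((ξ i c * Real.sign (ξ i c)) * Δ i a c) by ring,
        mul_sign_eq_abs, mul_sign_eq_abs]
      ring
    have key : (H.mulVec (z + ∑ i, (E i).mulVec (ξ i))) k
        = (H.mulVec z + (eabs H).mulVec (∑ i, (Δ i).mulVec fun j => |ξ i j|)) k := by
      simp only [Matrix.mulVec, dotProduct, Pi.add_apply, Finset.sum_apply,
        mul_add, Finset.mul_sum, eabs]
      rw [Finset.sum_add_distrib]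
      congr 1
      exact Finset.sum_congr rfl fun a _ => Finset.sum_congr rfl fun i _ =>
        Finset.sum_congr rfl fun c _ => term a i c
    rw [← key]; exact hmem
  · intro h w hw k
    obtain ⟨E, hE, rfl⟩ := hw
    refine le_trans ?_ (h k)
    rw [Matrix.mulVec_add]
    simp only [Pi.add_apply]
    have hle : (H.mulVec (∑ i, (E i).mulVec (ξ i))) k
        ≤ ((eabs H).mulVec (∑ i, (Δ i).mulVec fun j => |ξ i j|)) k := by
      simp only [Matrix.mulVec, dotProduct, Finset.sum_apply, eabs]
      apply Finset.sum_le_sum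
      intro a _
      have hS : |∑ i, ∑ c, E i a c * ξ i c| ≤ ∑ i, ∑ c, Δ i a c * |ξ i c| := by
        refine le_trans (Finset.abs_sum_le_sum_abs _ _) (Finset.sum_le_sum fun i _ => ?_)
        refine le_trans (Finset.abs_sum_le_sum_abs _ _) (Finset.sum_le_sum fun c _ => ?_)
        rw [abs_mul]
        exact mul_le_mul_of_nonneg_right (hE i a c) (abs_nonneg _)
      calc H k a * ∑ i, ∑ c, E i a c * ξ i c
          ≤ |H k a * ∑ i, ∑ c, E i a c * ξ i c| := le_abs_self _
        _ = |H k a| * |∑ i, ∑ c, E i a c * ξ i c| := abs_mul _ _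
        _ ≤ |H k a| * ∑ i, ∑ c, Δ i a c * |ξ i c| :=
            mul_le_mul_of_nonneg_left hS (abs_nonneg _)
    exact add_le_add_right hle _
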